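/- Let E be an m×n real random matrix that is (C₁, c₁, γ)-concentrated for constants C₁, c₁, γ > 0, and let A be a deterministic m×n real matrix of rank r. Let u₁, …, u_r, u_{−1}, …, u_{−r} be orthonormal eigenvectors of Ã with Ã u_k = σ_k u_k and Ã u_{−k} = −σ_k u_{−k} for k = 1, …, r, where σ₁ ≥ ⋯ ≥ σ_r > 0 are the nonzero singular values of A, and let U be the (m+n)×2r matrix whose columns are u₁, …, u_r, u_{−1}, …, u_{−r}. Then, for any t > 0, ℙ(‖Uᵀ Ẽ U‖ > t·r^{1/γ}) ≤ 2C₁·9^{2r}·exp(−(c₁/2ᵞ)·r·tᵞ/2ᵞ). -/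

import Mathlib

open MeasureTheory ProbabilityTheory Matrix

theorem Matrix.isHermitian_transpose_mul_self {m n : ℕ} (A : Matrix (Fin m) (Fin n) ℝ) :
    (Aᵀ * A).IsHermitian := by
  rw [← Matrix.conjTranspose_eq_transpose_of_trivial]
  exact Matrix.isHermitian_conjTranspose_mul_self A

noncomputable def sval {m n : ℕ} (A : Matrix (Fin m) (Fin n) ℝ) (k : ℕ) : ℝ :=
  if h : k - 1 < n then
    Real.sqrt (((Matrix.isHermitian_transpose_mul_self A).eigenvalues ∘
      Tuple.sort (Matrix.isHermitian_transpose_mul_self A).eigenvalues)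
      (Fin.rev ⟨k - 1, h⟩))
  else 0

noncomputable def spNorm {m n : Type*} [Fintype m] [Fintype n] [DecidableEq n]
    (A : Matrix m n ℝ) : ℝ :=
  ‖LinearMap.toContinuousLinearMap (Matrix.toEuclideanLin A)‖

noncomputable def sinAngle {d : ℕ} (u v : Fin d → ℝ) : ℝ :=
  Real.sqrt (1 - (u ⬝ᵥ v) ^ 2 / ((u ⬝ᵥ u) * (v ⬝ᵥ v)))

def Concentrated {Ω : Type*} [MeasurableSpace Ω] (μ : Measure Ω) {m n : ℕ}
    (E : Ω → Matrix (Fin m) (Fin n) ℝ) (C₁ c₁ γ : ℝ) : Prop :=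
  ∀ (u : Fin m → ℝ) (v : Fin n → ℝ), u ⬝ᵥ u = 1 → v ⬝ᵥ v = 1 →
    ∀ t : ℝ, 0 < t →
      μ {ω | t < |u ⬝ᵥ ((E ω) *ᵥ v)|} ≤ ENNReal.ofReal (C₁ * Real.exp (-c₁ * t ^ γ))

noncomputable def symMat {m n : ℕ} (E : Matrix (Fin m) (Fin n) ℝ) :
    Matrix (Fin (m + n)) (Fin (m + n)) ℝ :=
  (Matrix.reindex finSumFinEquiv finSumFinEquiv) (Matrix.fromBlocks 0 E Eᵀ 0)

noncomputable def eigVal {d : ℕ} (M : Matrix (Fin d) (Fin d) ℝ) (k : ℕ) : ℝ := by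
  classical
  exact if hM : M.IsHermitian then
    (if h : k - 1 < d then
      ((hM.eigenvalues ∘ Tuple.sort hM.eigenvalues) (Fin.rev ⟨k - 1, h⟩))
    else 0)
  else 0

noncomputable def toE {n : ℕ} (v : Fin n → ℝ) : EuclideanSpace ℝ (Fin n) :=
  (WithLp.equiv 2 (Fin n → ℝ)).symm v

noncomputable def projSub {n : ℕ} (K : Submodule ℝ (EuclideanSpace ℝ (Fin n))) :
    EuclideanSpace ℝ (Fin n) →L[ℝ] EuclideanSpace ℝ (Fin n) :=
  K.subtypeL.comp K.orthogonalProjectionOnto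

noncomputable def projSpan {n : ℕ} (S : Set (Fin n → ℝ)) :
    EuclideanSpace ℝ (Fin n) →L[ℝ] EuclideanSpace ℝ (Fin n) :=
  projSub (Submodule.span ℝ (toE '' S))

noncomputable def sinAngleSub {n : ℕ} (S T : Set (Fin n → ℝ)) : ℝ :=
  ‖projSpan S - projSpan T‖

def IsBernoulliMatrix {Ω : Type*} [MeasurableSpace Ω] (μ : Measure Ω) {n : ℕ}
    (E : Ω → Matrix (Fin n) (Fin n) ℝ) : Prop :=
  (∀ i j, Measurable fun ω => E ω i j) ∧
  iIndepFun (β := fun _ : Fin n × Fin n => ℝ) (m := fun _ => (inferInstance : MeasurableSpace ℝ))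
    (fun p ω => E ω p.1 p.2) μ ∧
  (∀ i j, μ {ω | E ω i j = 1} = ENNReal.ofReal (1/2) ∧
          μ {ω | E ω i j = -1} = ENNReal.ofReal (1/2))
open scoped ENNReal



section AuxNet
open Metric
open scoped ENNReal


open RealInnerProductSpace in
lemma quad_bound {F : Type*} [NormedAddCommGroup F] [InnerProductSpace ℝ F] (T : F →L[ℝ] F)
    (hT : ∀ x y : F, ⟪T x, y⟫ = ⟪x, T y⟫) {M : ℝ} (hM : 0 ≤ M)
    (h : ∀ x : F, ‖x‖ = 1 → |⟪T x, x⟫| ≤ M) : ‖T‖ ≤ M := by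
  have hq : ∀ z : F, |⟪T z, z⟫| ≤ M * ‖z‖ ^ 2 := by
    intro z
    rcases eq_or_ne z 0 with rfl | hz
    · simp
    · have hnz : (0:ℝ) < ‖z‖ := norm_pos_iff.mpr hz
      have h1 : ‖(‖z‖⁻¹ • z)‖ = 1 := by
        rw [norm_smul, norm_inv, norm_norm, inv_mul_cancel₀ hnz.ne']
      have h2 := h _ h1
      rw [ContinuousLinearMap.map_smul, real_inner_smul_left, real_inner_smul_right,
        abs_mul, abs_mul, abs_of_pos (inv_pos.mpr hnz)] at h2
      have h3 : ‖z‖⁻¹ * (‖z‖⁻¹ * |⟪T z, z⟫|) ≤ M := h2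
      have e : ‖z‖^2 * (‖z‖⁻¹ * (‖z‖⁻¹ * |⟪T z, z⟫|)) = |⟪T z, z⟫| := by
        field_simp
      calc |⟪T z, z⟫| = ‖z‖^2 * (‖z‖⁻¹ * (‖z‖⁻¹ * |⟪T z, z⟫|)) := e.symm
        _ ≤ ‖z‖^2 * M := mul_le_mul_of_nonneg_left h3 (sq_nonneg _)
        _ = M * ‖z‖^2 := mul_comm _ _
  have hunit : ∀ x : F, ‖x‖ = 1 → ‖T x‖ ≤ M := by
    intro x hx
    rcases eq_or_ne (T x) 0 with h0 | h0
    · simp [h0, hM]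
    · have hTx : (0:ℝ) < ‖T x‖ := norm_pos_iff.mpr h0
      set y : F := ‖T x‖⁻¹ • T x with hy
      have hy1 : ‖y‖ = 1 := by
        rw [hy, norm_smul, norm_inv, norm_norm, inv_mul_cancel₀ hTx.ne']
      have hpol : ⟪T (x+y), x+y⟫ - ⟪T (x-y), x-y⟫ = 4 * ⟪T x, y⟫ := by
        have h1 : ⟪T y, x⟫ = ⟪T x, y⟫ := by rw [hT y x, real_inner_comm]
        simp only [map_add, map_sub, inner_add_left, inner_add_right, inner_sub_left,
          inner_sub_right]
        rw [h1]; ring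
      have hb1 := hq (x + y)
      have hb2 := hq (x - y)
      have hpar : ‖x + y‖ ^ 2 + ‖x - y‖ ^ 2 = 2 * (‖x‖ ^ 2 + ‖y‖ ^ 2) := by
        have := parallelogram_law_with_norm ℝ x y
        nlinarith [this]
      have hx2 : ‖x‖^2 = 1 := by rw [hx]; norm_num
      have hy2 : ‖y‖^2 = 1 := by rw [hy1]; norm_num
      have hTxy : ⟪T x, y⟫ = ‖T x‖ := by
        rw [hy, real_inner_smul_right, real_inner_self_eq_norm_sq, sq]
        field_simp
      have : 4 * ‖T x‖ ≤ 4 * M := by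
        have hle : |⟪T (x+y), x+y⟫ - ⟪T (x-y), x-y⟫| ≤ M * ‖x+y‖^2 + M * ‖x-y‖^2 :=
          (abs_sub _ _).trans (add_le_add hb1 hb2)
        rw [hpol, hTxy] at hle
        have : |4 * ‖T x‖| = 4 * ‖T x‖ := abs_of_nonneg (by positivity)
        rw [this] at hle
        have hsum : ‖x + y‖ ^ 2 + ‖x - y‖ ^ 2 = 4 := by rw [hpar, hx2, hy2]; norm_num
        have hMs : M * ‖x + y‖ ^ 2 + M * ‖x - y‖ ^ 2 = M * 4 := by rw [← mul_add, hsum]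
        linarith
      linarith
  refine T.opNorm_le_bound hM (fun x => ?_)
  rcases eq_or_ne x 0 with rfl | hx
  · simp
  · have hnx : (0:ℝ) < ‖x‖ := norm_pos_iff.mpr hx
    have h1 : ‖(‖x‖⁻¹ • x)‖ = 1 := by
      rw [norm_smul, norm_inv, norm_norm, inv_mul_cancel₀ hnx.ne']
    have hu := hunit _ h1
    rw [ContinuousLinearMap.map_smul, norm_smul, norm_inv, norm_norm] at hu
    have e : ‖x‖ * (‖x‖⁻¹ * ‖T x‖) = ‖T x‖ := by field_simp
    calc ‖T x‖ = ‖x‖ * (‖x‖⁻¹ * ‖T x‖) := e.symm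
      _ ≤ ‖x‖ * M := mul_le_mul_of_nonneg_left hu hnx.le
      _ = M * ‖x‖ := mul_comm _ _

lemma net9 {ι : Type*} [Fintype ι] [Nonempty ι] :
    ∃ N : Finset (EuclideanSpace ℝ ι), (∀ x ∈ N, ‖x‖ = 1) ∧
      N.card ≤ 9 ^ (Fintype.card ι) ∧
      ∀ v : EuclideanSpace ℝ ι, ‖v‖ = 1 → ∃ x ∈ N, ‖v - x‖ ≤ 1/4 := by
  classical
  set d := Fintype.card ι with hd
  set c : ℝ≥0∞ := volume (Metric.ball (0 : EuclideanSpace ℝ ι) 1) with hc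
  have hc0 : c ≠ 0 := (measure_ball_pos _ _ one_pos).ne'
  have hctop : c ≠ ⊤ := measure_ball_lt_top.ne
  set P : Finset (EuclideanSpace ℝ ι) → Prop :=
    fun F => (∀ x ∈ F, ‖x‖ = 1) ∧ ∀ x ∈ F, ∀ y ∈ F, x ≠ y → 1/4 < ‖x - y‖ with hP
  have card_le : ∀ F, P F → F.card ≤ 9 ^ d := by
    intro F hF
    have hdisj : (F : Set (EuclideanSpace ℝ ι)).PairwiseDisjoint
        (fun x => Metric.ball x (1/8)) := by
      intro x hx y hy hxy
      apply Metric.ball_disjoint_ball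
      rw [dist_eq_norm]
      have := hF.2 x (by exact_mod_cast hx) y (by exact_mod_cast hy) hxy
      linarith
    have hsub : ∀ x ∈ F, Metric.ball x (1/8) ⊆ Metric.ball (0 : EuclideanSpace ℝ ι) (9/8) := by
      intro x hx z hz
      have hxn := hF.1 x hx
      rw [Metric.mem_ball, dist_zero_right]
      rw [Metric.mem_ball, dist_eq_norm] at hz
      calc ‖z‖ = ‖(z - x) + x‖ := by rw [sub_add_cancel]
        _ ≤ ‖z - x‖ + ‖x‖ := norm_add_le _ _
        _ < 9/8 := by rw [hxn]; linarith
    have hvol : ∀ (x : EuclideanSpace ℝ ι) (ρ : ℝ), 0 < ρ →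
        volume (Metric.ball x ρ) = ENNReal.ofReal (ρ ^ d) * c := by
      intro x ρ hρ
      rw [hc, Measure.addHaar_ball_of_pos volume x hρ, finrank_euclideanSpace]
    have key : (F.card : ℝ≥0∞) * ENNReal.ofReal ((1/8:ℝ) ^ d) * c
        ≤ ENNReal.ofReal ((9/8:ℝ)^d) * c := by
      calc (F.card : ℝ≥0∞) * ENNReal.ofReal ((1/8:ℝ) ^ d) * c
          = ∑ x ∈ F, volume (Metric.ball x (1/8)) := by
            rw [Finset.sum_congr rfl (fun x _ => hvol x (1/8) (by norm_num)),
              Finset.sum_const, nsmul_eq_mul, mul_assoc]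
        _ = volume (⋃ x ∈ F, Metric.ball x (1/8)) :=
            (measure_biUnion_finset hdisj (fun _ _ => measurableSet_ball)).symm
        _ ≤ volume (Metric.ball (0:EuclideanSpace ℝ ι) (9/8)) :=
            measure_mono (Set.iUnion₂_subset hsub)
        _ = ENNReal.ofReal ((9/8:ℝ)^d) * c := hvol _ _ (by norm_num)
    have key2 : (F.card : ℝ≥0∞) * ENNReal.ofReal ((1/8:ℝ)^d)
        ≤ ENNReal.ofReal ((9/8:ℝ)^d) :=
      (ENNReal.mul_le_mul_iff_left hc0 hctop).mp key
    have key3 : (F.card : ℝ) * (1/8:ℝ)^d ≤ (9/8:ℝ)^d := by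
      rw [show ((F.card : ℝ≥0∞)) = ENNReal.ofReal (F.card : ℝ) by simp,
        ← ENNReal.ofReal_mul (by positivity)] at key2
      exact (ENNReal.ofReal_le_ofReal_iff (by positivity)).mp key2
    have h8 : (0:ℝ) < (1/8:ℝ)^d := by positivity
    have key4 : (F.card : ℝ) ≤ (9:ℝ)^d := by
      have h98 : ((9:ℝ)/8)^d = 9^d * (1/8:ℝ)^d := by
        rw [← mul_pow]; norm_num
      rw [h98] at key3
      exact le_of_mul_le_mul_right key3 h8
    have key5 : (F.card : ℝ) ≤ ((9^d : ℕ) : ℝ) := by push_cast; exact key4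
    exact_mod_cast key5
  set S : Set ℕ := {k | ∃ F, P F ∧ F.card = k} with hS
  have hSne : S.Nonempty := ⟨0, ∅, ⟨by simp, by simp⟩, by simp⟩
  have hSbdd : BddAbove S := ⟨9^d, fun k hk => by
    obtain ⟨F, hF, hFk⟩ := hk; exact hFk ▸ card_le F hF⟩
  obtain ⟨F, hF, hFcard⟩ := Nat.sSup_mem hSne hSbdd
  refine ⟨F, hF.1, hFcard.symm ▸ (card_le F hF), ?_⟩
  intro v hv
  by_contra hcon
  push_neg at hcon
  have hvF : v ∉ F := by
    intro hvF
    have h0 := hcon v hvF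
    rw [sub_self, norm_zero] at h0
    linarith
  have hins : P (insert v F) := by
    constructor
    · intro x hx
      rcases Finset.mem_insert.mp hx with rfl | hx
      · exact hv
      · exact hF.1 x hx
    · intro x hx y hy hxy
      rcases Finset.mem_insert.mp hx with hx1 | hx1 <;>
        rcases Finset.mem_insert.mp hy with hy1 | hy1
      · exact absurd (hx1.trans hy1.symm) hxy
      · rw [hx1]; exact hcon y hy1
      · rw [hy1, norm_sub_rev]; exact hcon x hx1
      · exact hF.2 x hx1 y hy1 hxy
  have hmem : F.card + 1 ∈ S := ⟨insert v F, hins, Finset.card_insert_of_notMem hvF⟩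
  have := le_csSup hSbdd hmem
  omega

end AuxNet

lemma symMat_transpose {m n : ℕ} (M : Matrix (Fin m) (Fin n) ℝ) : (symMat M)ᵀ = symMat M := by
  unfold symMat
  rw [Matrix.reindex_apply, Matrix.transpose_submatrix, Matrix.fromBlocks_transpose]
  simp

lemma dot_sym {N : ℕ} (M : Matrix (Fin N) (Fin N) ℝ) (hM : Mᵀ = M) (a b : Fin N → ℝ) :
    a ⬝ᵥ (M *ᵥ b) = b ⬝ᵥ (M *ᵥ a) := by
  rw [Matrix.dotProduct_mulVec, ← Matrix.mulVec_transpose, hM, dotProduct_comm]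

lemma gram_quad {κ N : Type*} [Fintype κ] [Fintype N] [DecidableEq N]
    (M : Matrix N N ℝ) (e : κ → N → ℝ) (x : κ → ℝ) :
    x ⬝ᵥ ((Matrix.of fun a b => e a ⬝ᵥ (M *ᵥ e b)) *ᵥ x) =
      (∑ a, x a • e a) ⬝ᵥ (M *ᵥ ∑ a, x a • e a) := by
  classical
  set U : Matrix N κ ℝ := Matrix.of (fun i a => e a i) with hUdef
  have hU : (∑ a, x a • e a) = U *ᵥ x := by
    ext i
    simp [hUdef, Matrix.mulVec, dotProduct, Finset.sum_apply, mul_comm]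
  have hB : (Matrix.of fun a b => e a ⬝ᵥ (M *ᵥ e b)) = Uᵀ * M * U := by
    ext a b
    simp only [Matrix.of_apply, Matrix.mul_apply, Matrix.transpose_apply, hUdef,
      Matrix.mulVec, dotProduct, Finset.sum_mul, Finset.mul_sum]
    rw [Finset.sum_comm]
    exact Finset.sum_congr rfl fun i _ => Finset.sum_congr rfl fun j _ => by ring
  rw [hB, hU, ← Matrix.mulVec_mulVec, ← Matrix.mulVec_mulVec, Matrix.dotProduct_mulVec,
    Matrix.vecMul_transpose]

lemma gram_norm {κ N : Type*} [Fintype κ] [DecidableEq κ] [Fintype N] [DecidableEq N]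
    (e : κ → N → ℝ) (x : κ → ℝ)
    (honb : ∀ a b : κ, e a ⬝ᵥ e b = if a = b then 1 else 0) :
    (∑ a, x a • e a) ⬝ᵥ (∑ a, x a • e a) = ∑ a, x a * x a := by
  classical
  have h := gram_quad (1 : Matrix N N ℝ) e x
  simp only [Matrix.one_mulVec] at h
  rw [← h]
  have hG : (Matrix.of fun a b => e a ⬝ᵥ e b) = (1 : Matrix κ κ ℝ) := by
    ext a b; rw [Matrix.of_apply, honb, Matrix.one_apply]
  rw [hG, Matrix.one_mulVec]
  rfl

lemma symMat_quad {m n : ℕ} (M : Matrix (Fin m) (Fin n) ℝ) (v : Fin (m+n) → ℝ) :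
    v ⬝ᵥ (symMat M *ᵥ v) =
      2 * ((fun i => v (finSumFinEquiv (Sum.inl i))) ⬝ᵥ
           (M *ᵥ fun j => v (finSumFinEquiv (Sum.inr j)))) := by
  set p : Fin m → ℝ := fun i => v (finSumFinEquiv (Sum.inl i)) with hp
  set q : Fin n → ℝ := fun j => v (finSumFinEquiv (Sum.inr j)) with hq
  have hz : v ∘ finSumFinEquiv = Sum.elim p q := by
    funext j; cases j <;> rfl
  unfold symMat
  rw [Matrix.reindex_apply, Matrix.submatrix_mulVec_equiv, dotProduct_comp_equiv_symm,
    Equiv.symm_symm, hz, Matrix.fromBlocks_mulVec, Matrix.zero_mulVec, Matrix.zero_mulVec,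
    zero_add, add_zero, sumElim_dotProduct_sumElim]
  simp only [Sum.elim_comp_inl, Sum.elim_comp_inr]
  rw [Matrix.dotProduct_mulVec q Mᵀ p, Matrix.vecMul_transpose, dotProduct_comm (M *ᵥ q) p]
  ring

lemma dot_split {m n : ℕ} (v : Fin (m+n) → ℝ) :
    v ⬝ᵥ v = (fun i => v (finSumFinEquiv (Sum.inl i))) ⬝ᵥ (fun i => v (finSumFinEquiv (Sum.inl i)))
      + (fun j => v (finSumFinEquiv (Sum.inr j))) ⬝ᵥ (fun j => v (finSumFinEquiv (Sum.inr j))) := by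
  have hz : v ∘ finSumFinEquiv = Sum.elim (fun i => v (finSumFinEquiv (Sum.inl i)))
      (fun j => v (finSumFinEquiv (Sum.inr j))) := by
    funext j; cases j <;> rfl
  rw [← sumElim_dotProduct_sumElim, ← hz]
  exact (comp_equiv_dotProduct_comp_equiv _ _ _).symm


open RealInnerProductSpace in
lemma inner_toCLM {κ : Type*} [Fintype κ] [DecidableEq κ] (B : Matrix κ κ ℝ)
    (x : EuclideanSpace ℝ κ) :
    ⟪(LinearMap.toContinuousLinearMap (Matrix.toEuclideanLin B)) x, x⟫ =
      (fun a => x a) ⬝ᵥ (B *ᵥ fun a => x a) := by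
  simp only [LinearMap.coe_toContinuousLinearMap', PiLp.inner_apply, RCLike.inner_apply,
    conj_trivial, Matrix.toEuclideanLin_apply]
  rfl

set_option maxHeartbeats 2000000 in
theorem stmt13 {m n : ℕ} (C₁ c₁ γ : ℝ) (hC₁ : 0 < C₁) (hc₁ : 0 < c₁) (hγ : 0 < γ)
    {Ω : Type*} [MeasurableSpace Ω] (μ : Measure Ω) [IsProbabilityMeasure μ]
    (E : Ω → Matrix (Fin m) (Fin n) ℝ) (hE : Concentrated μ E C₁ c₁ γ)
    (A : Matrix (Fin m) (Fin n) ℝ) (r : ℕ) (hr : A.rank = r) (hσr : 0 < sval A r)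
    (u w : Fin r → Fin (m+n) → ℝ)
    (honb : ∀ a b : Fin r ⊕ Fin r,
      Sum.elim u w a ⬝ᵥ Sum.elim u w b = if a = b then 1 else 0)
    (hu : ∀ k : Fin r, symMat A *ᵥ u k = sval A ((k : ℕ) + 1) • u k)
    (hw : ∀ k : Fin r, symMat A *ᵥ w k = -sval A ((k : ℕ) + 1) • w k)
    (t : ℝ) (ht : 0 < t) :
    μ {ω | t * (r : ℝ) ^ (1/γ) < spNorm (Matrix.of fun a b : Fin r ⊕ Fin r =>
        Sum.elim u w a ⬝ᵥ (symMat (E ω) *ᵥ Sum.elim u w b))} ≤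
      ENNReal.ofReal (2 * C₁ * 9 ^ (2 * r) *
        Real.exp (-(c₁ / 2 ^ γ) * r * t ^ γ / 2 ^ γ)) := by
  classical
  rcases Nat.eq_zero_or_pos r with rfl | hrpos
  · -- degenerate case r = 0
    have hzero : ∀ ω : Ω, spNorm (Matrix.of fun a b : Fin 0 ⊕ Fin 0 =>
        Sum.elim u w a ⬝ᵥ (symMat (E ω) *ᵥ Sum.elim u w b)) ≤ 0 := by
      intro ω
      refine ContinuousLinearMap.opNorm_le_bound _ le_rfl fun x => ?_
      haveI : IsEmpty (Fin 0 ⊕ Fin 0) := by infer_instance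
      rw [Subsingleton.elim x 0]
      simp
    have hempty : {ω | t * ((0:ℕ) : ℝ) ^ (1/γ) < spNorm (Matrix.of fun a b : Fin 0 ⊕ Fin 0 =>
        Sum.elim u w a ⬝ᵥ (symMat (E ω) *ᵥ Sum.elim u w b))} = (∅ : Set Ω) := by
      ext ω
      simp only [Set.mem_setOf_eq, Set.mem_empty_iff_false, iff_false, not_lt, Nat.cast_zero]
      rw [Real.zero_rpow (one_div_ne_zero hγ.ne'), mul_zero]
      exact hzero ω
    rw [hempty, measure_empty]
    exact zero_le
  · haveI hne : Nonempty (Fin r ⊕ Fin r) := ⟨Sum.inl ⟨0, hrpos⟩⟩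
    set e : Fin r ⊕ Fin r → Fin (m+n) → ℝ := Sum.elim u w with he
    obtain ⟨N, hN1, hNcard, hNnet⟩ := net9 (ι := Fin r ⊕ Fin r)
    set s : ℝ := t * (r:ℝ) ^ (1/γ) with hs
    have hr0 : (0:ℝ) < (r:ℝ) := by exact_mod_cast hrpos
    have hs0 : 0 < s := mul_pos ht (Real.rpow_pos_of_pos hr0 _)
    set bnd : ℝ := C₁ * Real.exp (-c₁ * (s/2)^γ) with hbnd
    -- per-pair concentration bound
    have perpq : ∀ (p : Fin m → ℝ) (q : Fin n → ℝ), p ⬝ᵥ p + q ⬝ᵥ q = 1 →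
        μ {ω | s/2 < |2 * (p ⬝ᵥ (E ω *ᵥ q))|} ≤ ENNReal.ofReal bnd := by
      intro p q hpq
      rcases eq_or_ne p 0 with rfl | hp
      · have h0 : {ω | s/2 < |2 * ((0 : Fin m → ℝ) ⬝ᵥ (E ω *ᵥ q))|} = (∅ : Set Ω) := by
          ext ω
          simp only [zero_dotProduct, mul_zero, abs_zero, Set.mem_setOf_eq,
            Set.mem_empty_iff_false, iff_false, not_lt]
          linarith [half_pos hs0]
        rw [h0, measure_empty]
        exact zero_le
      rcases eq_or_ne q 0 with rfl | hq
      · have h0 : {ω | s/2 < |2 * (p ⬝ᵥ (E ω *ᵥ (0 : Fin n → ℝ)))|} = (∅ : Set Ω) := by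
          ext ω
          simp only [Matrix.mulVec_zero, dotProduct_zero, mul_zero, abs_zero,
            Set.mem_setOf_eq, Set.mem_empty_iff_false, iff_false, not_lt]
          linarith [half_pos hs0]
        rw [h0, measure_empty]
        exact zero_le
      · have hppnn : 0 ≤ p ⬝ᵥ p := Finset.sum_nonneg fun i _ => mul_self_nonneg _
        have hqqnn : 0 ≤ q ⬝ᵥ q := Finset.sum_nonneg fun i _ => mul_self_nonneg _
        have hpp : 0 < p ⬝ᵥ p := by
          rcases hppnn.lt_or_eq with h | h
          · exact h
          · exact absurd (dotProduct_self_eq_zero.mp h.symm) hp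
        have hqq : 0 < q ⬝ᵥ q := by
          rcases hqqnn.lt_or_eq with h | h
          · exact h
          · exact absurd (dotProduct_self_eq_zero.mp h.symm) hq
        set α : ℝ := Real.sqrt (p ⬝ᵥ p) with hαdef
        set β : ℝ := Real.sqrt (q ⬝ᵥ q) with hβdef
        have hα0 : 0 < α := Real.sqrt_pos.mpr hpp
        have hβ0 : 0 < β := Real.sqrt_pos.mpr hqq
        have hα2 : α^2 = p ⬝ᵥ p := Real.sq_sqrt hpp.le
        have hβ2 : β^2 = q ⬝ᵥ q := Real.sq_sqrt hqq.le
        set p' : Fin m → ℝ := α⁻¹ • p with hp'def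
        set q' : Fin n → ℝ := β⁻¹ • q with hq'def
        have hp'1 : p' ⬝ᵥ p' = 1 := by
          rw [hp'def, smul_dotProduct, dotProduct_smul, smul_eq_mul, smul_eq_mul,
            ← hα2]
          field_simp
        have hq'1 : q' ⬝ᵥ q' = 1 := by
          rw [hq'def, smul_dotProduct, dotProduct_smul, smul_eq_mul, smul_eq_mul,
            ← hβ2]
          field_simp
        have hαβ : 2 * (α * β) ≤ 1 := by nlinarith [sq_nonneg (α - β)]
        have hincl : {ω | s/2 < |2 * (p ⬝ᵥ (E ω *ᵥ q))|} ⊆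
            {ω | s/2 < |p' ⬝ᵥ (E ω *ᵥ q')|} := by
          intro ω hω
          simp only [Set.mem_setOf_eq] at hω ⊢
          have hfac : p ⬝ᵥ (E ω *ᵥ q) = (α * β) * (p' ⬝ᵥ (E ω *ᵥ q')) := by
            rw [hp'def, hq'def, smul_dotProduct, Matrix.mulVec_smul,
              dotProduct_smul, smul_eq_mul, smul_eq_mul]
            field_simp
          rw [hfac] at hω
          have habs : |2 * ((α*β) * (p' ⬝ᵥ (E ω *ᵥ q')))| =
              (2 * (α*β)) * |p' ⬝ᵥ (E ω *ᵥ q')| := by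
            rw [abs_mul, abs_mul, abs_of_nonneg (by norm_num : (0:ℝ) ≤ 2),
              abs_of_pos (mul_pos hα0 hβ0)]
            ring
          rw [habs] at hω
          have h1 : (2 * (α*β)) * |p' ⬝ᵥ (E ω *ᵥ q')| ≤ |p' ⬝ᵥ (E ω *ᵥ q')| := by
            nlinarith [abs_nonneg (p' ⬝ᵥ (E ω *ᵥ q'))]
          linarith
        exact (measure_mono hincl).trans (hE p' q' hp'1 hq'1 (s/2) (half_pos hs0))
    -- the quadratic form matrix is symmetric
    have hBsym : ∀ ω : Ω, (Matrix.of fun a b : Fin r ⊕ Fin r =>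
        e a ⬝ᵥ (symMat (E ω) *ᵥ e b))ᵀ =
        Matrix.of fun a b : Fin r ⊕ Fin r => e a ⬝ᵥ (symMat (E ω) *ᵥ e b) := by
      intro ω
      ext a b
      simp only [Matrix.transpose_apply, Matrix.of_apply]
      exact dot_sym _ (symMat_transpose (E ω)) (e b) (e a)
    set T : Ω → (EuclideanSpace ℝ (Fin r ⊕ Fin r) →L[ℝ] EuclideanSpace ℝ (Fin r ⊕ Fin r)) :=
      fun ω => LinearMap.toContinuousLinearMap (Matrix.toEuclideanLin
        (Matrix.of fun a b : Fin r ⊕ Fin r => e a ⬝ᵥ (symMat (E ω) *ᵥ e b))) with hTdef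
    have hTsymm : ∀ (ω : Ω) (x y : EuclideanSpace ℝ (Fin r ⊕ Fin r)),
        (inner ℝ (T ω x) y : ℝ) = inner ℝ x (T ω y) := by
      intro ω x y
      have hH : (Matrix.of fun a b : Fin r ⊕ Fin r =>
          e a ⬝ᵥ (symMat (E ω) *ᵥ e b)).IsHermitian := by
        have h2 : (Matrix.of fun a b : Fin r ⊕ Fin r => e a ⬝ᵥ (symMat (E ω) *ᵥ e b))ᴴ =
            (Matrix.of fun a b : Fin r ⊕ Fin r => e a ⬝ᵥ (symMat (E ω) *ᵥ e b))ᵀ := by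
          ext i j
          simp [Matrix.conjTranspose_apply]
        exact h2.trans (hBsym ω)
      exact (Matrix.isHermitian_iff_isSymmetric.mp hH) x y
    -- quadratic form evaluation
    have hinner : ∀ (ω : Ω) (x : EuclideanSpace ℝ (Fin r ⊕ Fin r)),
        (inner ℝ (T ω x) x : ℝ) =
          2 * ((fun i => (∑ a, x a • e a) (finSumFinEquiv (Sum.inl i))) ⬝ᵥ
            (E ω *ᵥ fun j => (∑ a, x a • e a) (finSumFinEquiv (Sum.inr j)))) := by
      intro ω x
      rw [hTdef]
      rw [inner_toCLM, gram_quad, symMat_quad]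
    -- norm decomposition
    have hsq : ∀ x : EuclideanSpace ℝ (Fin r ⊕ Fin r), ∑ a, x a * x a = ‖x‖^2 := by
      intro x
      rw [← real_inner_self_eq_norm_sq]
      simp only [PiLp.inner_apply, RCLike.inner_apply, conj_trivial]
    have hnorm1 : ∀ x : EuclideanSpace ℝ (Fin r ⊕ Fin r), ‖x‖ = 1 →
        (fun i => (∑ a, x a • e a) (finSumFinEquiv (Sum.inl i))) ⬝ᵥ
          (fun i => (∑ a, x a • e a) (finSumFinEquiv (Sum.inl i))) +
        (fun j => (∑ a, x a • e a) (finSumFinEquiv (Sum.inr j))) ⬝ᵥ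
          (fun j => (∑ a, x a • e a) (finSumFinEquiv (Sum.inr j))) = 1 := by
      intro x hx
      rw [← dot_split, gram_norm e (fun a => x a) honb, hsq x, hx]
      norm_num
    -- event inclusion into the union over the net
    have hsubset : {ω | s < spNorm (Matrix.of fun a b : Fin r ⊕ Fin r =>
        e a ⬝ᵥ (symMat (E ω) *ᵥ e b))} ⊆
        ⋃ x ∈ N, {ω | s/2 < |(inner ℝ (T ω x) x : ℝ)|} := by
      intro ω hω
      simp only [Set.mem_setOf_eq] at hω
      have hω' : s < ‖T ω‖ := hω
      rw [Set.mem_iUnion₂]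
      by_contra hcon
      push_neg at hcon
      simp only [Set.mem_setOf_eq, not_lt] at hcon
      have hTle : ‖T ω‖ ≤ s/2 + ‖T ω‖/2 := by
        refine quad_bound (T ω) (hTsymm ω) (by linarith [norm_nonneg (T ω)]) ?_
        intro v hv
        obtain ⟨x, hxN, hxv⟩ := hNnet v hv
        have hxn : ‖x‖ = 1 := hN1 x hxN
        have hid : (inner ℝ (T ω v) v : ℝ) - inner ℝ (T ω x) x =
            (inner ℝ (T ω (v - x)) v : ℝ) + inner ℝ (T ω x) (v - x) := by
          simp only [map_sub, inner_sub_left, inner_sub_right]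
          ring
        have hb1 : |(inner ℝ (T ω (v - x)) v : ℝ)| ≤ ‖T ω‖ * (1/4) := by
          calc |(inner ℝ (T ω (v - x)) v : ℝ)| ≤ ‖T ω (v - x)‖ * ‖v‖ :=
                abs_real_inner_le_norm _ _
            _ ≤ (‖T ω‖ * ‖v - x‖) * ‖v‖ :=
                mul_le_mul_of_nonneg_right ((T ω).le_opNorm (v - x)) (norm_nonneg v)
            _ ≤ ‖T ω‖ * (1/4) := by
                rw [hv, mul_one]
                exact mul_le_mul_of_nonneg_left hxv (norm_nonneg _)
        have hb2 : |(inner ℝ (T ω x) (v - x) : ℝ)| ≤ ‖T ω‖ * (1/4) := by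
          calc |(inner ℝ (T ω x) (v - x) : ℝ)| ≤ ‖T ω x‖ * ‖v - x‖ :=
                abs_real_inner_le_norm _ _
            _ ≤ ‖T ω‖ * (1/4) := by
                have h1 : ‖T ω x‖ ≤ ‖T ω‖ := by
                  have := (T ω).le_opNorm x
                  rwa [hxn, mul_one] at this
                exact mul_le_mul h1 hxv (norm_nonneg _) (norm_nonneg _)
        have hx2 := hcon x hxN
        calc |(inner ℝ (T ω v) v : ℝ)|
            = |(inner ℝ (T ω x) x : ℝ) + ((inner ℝ (T ω v) v : ℝ) - inner ℝ (T ω x) x)| := by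
              ring_nf
          _ ≤ |(inner ℝ (T ω x) x : ℝ)| + |(inner ℝ (T ω v) v : ℝ) - inner ℝ (T ω x) x| :=
              abs_add_le _ _
          _ ≤ s/2 + (‖T ω‖ * (1/4) + ‖T ω‖ * (1/4)) := by
              refine add_le_add hx2 ?_
              rw [hid]
              exact (abs_add_le _ _).trans (add_le_add hb1 hb2)
          _ = s/2 + ‖T ω‖/2 := by ring
      linarith
    -- cardinality
    have hcard : N.card ≤ 9^(2*r) := by
      have hc2 : Fintype.card (Fin r ⊕ Fin r) = 2*r := by
        simp [Fintype.card_sum, two_mul]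
      calc N.card ≤ 9^(Fintype.card (Fin r ⊕ Fin r)) := hNcard
        _ = 9^(2*r) := by rw [hc2]
    -- final exponent comparison
    set X : ℝ := (2:ℝ)^γ with hXdef
    have hX1 : (1:ℝ) ≤ X := by
      rw [hXdef, show (1:ℝ) = (2:ℝ)^(0:ℝ) by rw [Real.rpow_zero]]
      exact Real.rpow_le_rpow_of_exponent_le (by norm_num) hγ.le
    have hX0 : (0:ℝ) < X := lt_of_lt_of_le one_pos hX1
    have htγ : (0:ℝ) < t^γ := Real.rpow_pos_of_pos ht _
    have hsg : ((s/2:ℝ))^γ = t^γ * (r:ℝ) / X := by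
      rw [hs, hXdef, Real.div_rpow (by positivity) (by norm_num : (0:ℝ) ≤ 2),
        Real.mul_rpow ht.le (Real.rpow_nonneg hr0.le _), ← Real.rpow_mul hr0.le,
        one_div_mul_cancel hγ.ne', Real.rpow_one]
    have hab : -c₁ * (s/2)^γ ≤ -(c₁ / X) * (r:ℝ) * t^γ / X := by
      rw [hsg]
      have hA : (0:ℝ) ≤ c₁ * (r:ℝ) * t^γ := by positivity
      have hXle : X ≤ X * X := le_mul_of_one_le_left hX0.le hX1
      have hdiv : (c₁ * (r:ℝ) * t^γ) / (X*X) ≤ (c₁ * (r:ℝ) * t^γ) / X :=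
        div_le_div_of_nonneg_left hA hX0 hXle
      have e1 : -c₁ * (t^γ * (r:ℝ) / X) = -((c₁ * (r:ℝ) * t^γ)/X) := by ring
      have e2 : -(c₁ / X) * (r:ℝ) * t^γ / X = -((c₁ * (r:ℝ) * t^γ)/(X*X)) := by
        field_simp
      rw [e1, e2]
      linarith
    -- put everything together
    calc μ {ω | s < spNorm (Matrix.of fun a b : Fin r ⊕ Fin r =>
            e a ⬝ᵥ (symMat (E ω) *ᵥ e b))}
        ≤ μ (⋃ x ∈ N, {ω | s/2 < |(inner ℝ (T ω x) x : ℝ)|}) := measure_mono hsubset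
      _ ≤ ∑ x ∈ N, μ {ω | s/2 < |(inner ℝ (T ω x) x : ℝ)|} := measure_biUnion_finset_le _ _
      _ ≤ ∑ _x ∈ N, ENNReal.ofReal bnd := by
          refine Finset.sum_le_sum fun x hx => ?_
          have h1 : {ω | s/2 < |(inner ℝ (T ω x) x : ℝ)|} =
              {ω | s/2 < |2 * ((fun i => (∑ a, x a • e a) (finSumFinEquiv (Sum.inl i))) ⬝ᵥ
                (E ω *ᵥ fun j => (∑ a, x a • e a) (finSumFinEquiv (Sum.inr j))))|} := by
            ext ω
            rw [Set.mem_setOf_eq, Set.mem_setOf_eq, hinner ω x]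
          rw [h1]
          exact perpq _ _ (hnorm1 x (hN1 x hx))
      _ = N.card • ENNReal.ofReal bnd := Finset.sum_const _
      _ = (N.card : ℝ≥0∞) * ENNReal.ofReal bnd := by rw [nsmul_eq_mul]
      _ ≤ ((9^(2*r) : ℕ) : ℝ≥0∞) * ENNReal.ofReal bnd := by
          exact mul_le_mul_left (Nat.cast_le.mpr hcard) _
      _ ≤ ENNReal.ofReal (2 * C₁ * 9 ^ (2 * r) *
            Real.exp (-(c₁ / X) * (r:ℝ) * t ^ γ / X)) := by
          rw [← ENNReal.ofReal_natCast, ← ENNReal.ofReal_mul (Nat.cast_nonneg _)]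
          apply ENNReal.ofReal_le_ofReal
          push_cast
          rw [hbnd]
          have hexp : Real.exp (-c₁ * (s/2)^γ) ≤ Real.exp (-(c₁ / X) * (r:ℝ) * t^γ / X) :=
            Real.exp_le_exp.mpr hab
          have h9 : (0:ℝ) ≤ (9:ℝ)^(2*r) := by positivity
          have hnn : (0:ℝ) ≤ C₁ * (9:ℝ)^(2*r) * Real.exp (-(c₁ / X) * (r:ℝ) * t^γ / X) := by
            have := Real.exp_pos (-(c₁ / X) * (r:ℝ) * t^γ / X)
            positivity
          nlinarith [mul_le_mul_of_nonneg_left hexp (mul_nonneg hC₁.le h9)]
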